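/- Let p_a, p_b, p_c ∈ ℝ² be non-collinear and let p_d ∈ ℝ² be any point. Set l_{xy} = ‖p_x - p_y‖², q_d = (l_{ab} + l_{ad} - l_{bd}, l_{ac} + l_{ad} - l_{cd})ᵀ, and let G₂ be the Gram matrix of v_{ab}, v_{ac}. Then l_{ad} = (1/4) q_dᵀ G₂⁻¹ q_d. -/

import Mathlib

open Matrix

/-- With non-collinear reference points `p_a, p_b, p_c` and any point `p_d`,
`l_ad = (1/4) q_dᵀ G₂⁻¹ q_d`. -/
theorem sq_dist_eq_quadratic_form (pa pb pc pd : EuclideanSpace ℝ (Fin 2))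
    (hnc : LinearIndependent ℝ ![pb - pa, pc - pa]) :
    let l : EuclideanSpace ℝ (Fin 2) → EuclideanSpace ℝ (Fin 2) → ℝ :=
      fun x y => ‖x - y‖ ^ 2
    let G2 : Matrix (Fin 2) (Fin 2) ℝ :=
      !![inner (𝕜 := ℝ) (pb - pa) (pb - pa), inner (𝕜 := ℝ) (pb - pa) (pc - pa);
         inner (𝕜 := ℝ) (pc - pa) (pb - pa), inner (𝕜 := ℝ) (pc - pa) (pc - pa)]
    let qd : Fin 2 → ℝ :=
      ![l pa pb + l pa pd - l pb pd, l pa pc + l pa pd - l pc pd]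
    l pa pd = (1 / 4) * (qd ⬝ᵥ (G2⁻¹ *ᵥ qd)) := by
  intro l G2 qd
  have key : ∀ s t : ℝ, s • (pb - pa) + t • (pc - pa) = 0 → s = 0 ∧ t = 0 :=
    LinearIndependent.pair_iff.mp hnc
  set u0 : ℝ := (pb - pa) 0 with hu0
  set u1 : ℝ := (pb - pa) 1 with hu1
  set v0 : ℝ := (pc - pa) 0 with hv0
  set v1 : ℝ := (pc - pa) 1 with hv1
  have hD : u0 * v1 - u1 * v0 ≠ 0 := by
    intro h
    have comb : ∀ s t : ℝ, s * u0 + t * v0 = 0 → s * u1 + t * v1 = 0 →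
        s = 0 ∧ t = 0 := by
      intro s t h0 h1
      refine key s t ?_
      ext i
      fin_cases i <;> simpa using by assumption
    have h1 := comb v1 (-u1) (by linarith [h]) (by ring)
    have h2 := comb v0 (-u0) (by ring) (by linarith [h])
    have := comb 1 0 (by have := h2.2; linarith) (by have := h1.2; linarith)
    exact one_ne_zero this.1
  have hnorm : ∀ x y : EuclideanSpace ℝ (Fin 2),
      ‖x - y‖ ^ 2 = (x 0 - y 0) ^ 2 + (x 1 - y 1) ^ 2 := by
    intro x y
    rw [← real_inner_self_eq_norm_sq]
    simp only [PiLp.inner_apply, RCLike.inner_apply, Fin.sum_univ_two, PiLp.sub_apply, conj_trivial]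
    ring
  have hinner : ∀ x y : EuclideanSpace ℝ (Fin 2),
      (inner ℝ x y : ℝ) = x 0 * y 0 + x 1 * y 1 := by
    intro x y
    simp [PiLp.inner_apply, RCLike.inner_apply, Fin.sum_univ_two]
    ring
  rw [hu0, hu1, hv0, hv1] at hD
  have hD' : (pb 0 - pa 0) * (pc 1 - pa 1) - (pb 1 - pa 1) * (pc 0 - pa 0) ≠ 0 := by
    simpa using hD
  have hdet : G2.det =
      ((pb 0 - pa 0) * (pc 1 - pa 1) - (pb 1 - pa 1) * (pc 0 - pa 0)) ^ 2 := by
    simp only [G2, Matrix.det_fin_two_of, hinner, PiLp.sub_apply]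
    ring
  rw [Matrix.inv_def, Ring.inverse_eq_inv', hdet]
  simp only [G2, Matrix.adjugate_fin_two_of]
  simp only [l, qd, hnorm, hinner]
  simp only [Matrix.smul_mulVec, Matrix.mulVec, dotProduct,
    Fin.sum_univ_two, Matrix.cons_val', Matrix.cons_val_zero, Matrix.cons_val_one,
    Matrix.head_cons, Matrix.head_fin_const, Matrix.empty_val',
    Matrix.cons_val_fin_one, Pi.smul_apply, smul_eq_mul, Matrix.cons_val_one,
    PiLp.sub_apply, Matrix.smul_apply, Matrix.of_apply]
  field_simp
  ring
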